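/- arXiv:1209.1644 — 3 statements merged into one kernel-verified Lean document; each statement's English description precedes it below -/
import Mathlib

section
/- For γ ∈ (0, 1/2) and every real x, ∫₀^∞ min(|x·γ t^{γ−1}|, |x·γ t^{γ−1}|²) dt = C·|x|^{1/(1−γ)}, where C = γ^{1/(1−γ)}·(γ^{−1} + (1−2γ)^{−1}). -/
open MeasureTheory

/-- For `γ ∈ (0,1/2)` and every real `x`,
`∫₀^∞ min(|x·γ t^{γ−1}|, |x·γ t^{γ−1}|²) dt = C·|x|^{1/(1−γ)}`
with `C = γ^{1/(1−γ)}·(γ⁻¹ + (1−2γ)⁻¹)`. -/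
theorem fractional_kernel_integral (γ : ℝ) (hγ0 : 0 < γ) (hγ : γ < 1/2) (x : ℝ) :
    ∫ t in Set.Ioi (0:ℝ), min |x * (γ * t ^ (γ - 1))| (|x * (γ * t ^ (γ - 1))| ^ 2) =
      (γ ^ (1 / (1 - γ)) * (γ⁻¹ + (1 - 2*γ)⁻¹)) * |x| ^ (1 / (1 - γ)) := by
  have h1γ : (0:ℝ) < 1 - γ := by linarith
  rcases eq_or_ne x 0 with rfl | hx
  · simp
    exact Or.inr (Real.zero_rpow (inv_ne_zero h1γ.ne'))
  set a := |x| * γ with ha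
  have ha0 : 0 < a := mul_pos (abs_pos.mpr hx) hγ0
  set T := a ^ (1/(1-γ)) with hTdef
  have hT0 : 0 < T := Real.rpow_pos_of_pos ha0 _
  have hTa : T ^ (1 - γ) = a := by
    rw [hTdef, ← Real.rpow_mul ha0.le, one_div, inv_mul_cancel₀ h1γ.ne', Real.rpow_one]
  have habs : ∀ t : ℝ, 0 < t → |x * (γ * t ^ (γ - 1))| = a * t ^ (γ - 1) := by
    intro t ht
    have h2 : (0:ℝ) < t ^ (γ - 1) := Real.rpow_pos_of_pos ht _
    rw [abs_mul, abs_mul, abs_of_pos hγ0, abs_of_pos h2]; ring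
  -- key comparison: for t > 0, t ≤ T ↔ 1 ≤ a * t^(γ-1)
  have hkey : ∀ t : ℝ, 0 < t → (t ≤ T ↔ 1 ≤ a * t ^ (γ - 1)) := by
    intro t ht
    have htp : (0:ℝ) < t ^ (1 - γ) := Real.rpow_pos_of_pos ht _
    have h1 : a * t ^ (γ - 1) = a / t ^ (1 - γ) := by
      rw [show γ - 1 = -(1-γ) by ring, Real.rpow_neg ht.le, div_eq_mul_inv]
    rw [h1, one_le_div htp, ← hTa]
    exact (Real.rpow_le_rpow_iff ht.le hT0.le h1γ).symm
  -- equalities of integrands on pieces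
  have heq1 : Set.EqOn (fun t => min |x * (γ * t ^ (γ - 1))| (|x * (γ * t ^ (γ - 1))| ^ 2))
      (fun t => a * t ^ (γ - 1)) (Set.Ioc 0 T) := by
    intro t ht
    have ht0 : (0:ℝ) < t := ht.1
    have h1 : 1 ≤ a * t ^ (γ - 1) := (hkey t ht0).1 ht.2
    simp only [habs t ht0]
    exact min_eq_left (le_self_pow₀ (by linarith) two_ne_zero)
  have heq2 : Set.EqOn (fun t => min |x * (γ * t ^ (γ - 1))| (|x * (γ * t ^ (γ - 1))| ^ 2))
      (fun t => a^2 * t ^ (2*γ - 2)) (Set.Ioi T) := by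
    intro t ht
    have ht0 : (0:ℝ) < t := hT0.trans ht
    have htp : (0:ℝ) < t ^ (γ - 1) := Real.rpow_pos_of_pos ht0 _
    have h1 : a * t ^ (γ - 1) ≤ 1 := by
      by_contra h
      exact absurd ((hkey t ht0).2 (le_of_not_ge h)) (not_le.mpr ht)
    have hsq : (a * t ^ (γ - 1))^2 = a^2 * t ^ (2*γ - 2) := by
      rw [mul_pow, ← Real.rpow_natCast (t ^ (γ - 1)) 2, ← Real.rpow_mul ht0.le,
        show (γ - 1)*((2:ℕ):ℝ) = 2*γ - 2 by push_cast; ring]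
    simp only [habs t ht0]
    rw [min_eq_right, hsq]
    calc (a * t ^ (γ - 1))^2 ≤ (a * t ^ (γ - 1)) * 1 := by
          rw [pow_two]
          exact mul_le_mul_of_nonneg_left h1 (by positivity)
      _ = a * t ^ (γ - 1) := mul_one _
  -- integrability
  have hint1 : IntegrableOn (fun t => a * t ^ (γ - 1)) (Set.Ioc 0 T) := by
    have := (intervalIntegral.intervalIntegrable_rpow' (by linarith : (-1:ℝ) < γ - 1)
      (a := 0) (b := T))
    rw [intervalIntegrable_iff_integrableOn_Ioc_of_le hT0.le] at this
    exact this.const_mul a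
  have hint2 : IntegrableOn (fun t => a^2 * t ^ (2*γ - 2)) (Set.Ioi T) :=
    (integrableOn_Ioi_rpow_of_lt (by linarith) hT0).const_mul _
  have hsplit : Set.Ioi (0:ℝ) = Set.Ioc 0 T ∪ Set.Ioi T :=
    (Set.Ioc_union_Ioi_eq_Ioi hT0.le).symm
  rw [hsplit, setIntegral_union (Set.Ioc_disjoint_Ioi le_rfl) measurableSet_Ioi
      (hint1.congr_fun heq1.symm measurableSet_Ioc)
      (hint2.congr_fun heq2.symm measurableSet_Ioi),
    setIntegral_congr_fun measurableSet_Ioc heq1,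
    setIntegral_congr_fun measurableSet_Ioi heq2,
    MeasureTheory.integral_const_mul, MeasureTheory.integral_const_mul,
    integral_Ioi_rpow_of_lt (by linarith) hT0,
    ← intervalIntegral.integral_of_le hT0.le,
    integral_rpow (Or.inl (by linarith : (-1:ℝ) < γ - 1))]
  have e0 : γ - 1 + 1 = γ := by ring
  have e0' : 2*γ - 2 + 1 = 2*γ - 1 := by ring
  rw [e0, e0', Real.zero_rpow hγ0.ne', sub_zero]
  -- rpow algebra
  have e1 : a * (T ^ γ / γ) = a ^ (1/(1-γ)) / γ := by
    rw [hTdef, ← Real.rpow_mul ha0.le]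
    rw [show a * (a ^ (1/(1-γ) * γ) / γ) = a^(1:ℝ) * a ^ (1/(1-γ) * γ) / γ by
      rw [Real.rpow_one]; ring]
    rw [← Real.rpow_add ha0]
    congr 2
    field_simp
    ring
  have hne1 : (2*γ - 1) ≠ 0 := ne_of_lt (by linarith)
  have hne2 : (1 - 2*γ) ≠ 0 := ne_of_gt (by linarith)
  have e2 : a^2 * (-T ^ (2*γ - 1) / (2*γ - 1)) = a ^ (1/(1-γ)) / (1 - 2*γ) := by
    have h2 : a^2 * T ^ (2*γ - 1) = a ^ (1/(1-γ)) := by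
      rw [hTdef, ← Real.rpow_mul ha0.le,
        show a^2 = a^((2:ℕ):ℝ) by rw [Real.rpow_natCast],
        ← Real.rpow_add ha0,
        show ((2:ℕ):ℝ) + 1/(1-γ) * (2*γ - 1) = 1/(1-γ) by push_cast; field_simp; ring]
    calc a^2 * (-T ^ (2*γ - 1) / (2*γ - 1)) = (a^2 * T ^ (2*γ - 1)) * (1/(1 - 2*γ)) := by
          field_simp; ring
      _ = a ^ (1/(1-γ)) / (1 - 2*γ) := by rw [h2]; ring
  rw [e1, e2]
  have e3 : γ ^ (1/(1-γ)) * |x| ^ (1/(1-γ)) = a ^ (1/(1-γ)) := by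
    rw [ha, Real.mul_rpow (abs_nonneg x) hγ0.le]; ring
  have e4 : (γ ^ (1/(1-γ)) * (γ⁻¹ + (1 - 2*γ)⁻¹)) * |x| ^ (1/(1-γ))
      = a ^ (1/(1-γ)) * (γ⁻¹ + (1 - 2*γ)⁻¹) := by rw [← e3]; ring
  rw [e4]
  ring
end

section
/- Let γ ∈ (0,1) and let ρ be a Borel measure on ℝ such that ∫_{−∞}^{0} ∫_ℝ min(1, |((1−s)^γ − (−s)^γ)x|²) ρ(dx) ds < ∞. Then ∫_{|γx|>1} (|γx|^{1/(1−γ)} − 1) ρ(dx) < ∞; in particular ∫_{|x|>1} |x|^{1/(1−γ)} ρ(dx) < ∞. -/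
open MeasureTheory
open scoped ENNReal NNReal

lemma tangent_ineq_aux (γ : ℝ) (hγ0 : 0 < γ) (hγ1 : γ < 1) (a : ℝ) (ha : 0 ≤ a) :
    γ * (a + 1) ^ (γ - 1) ≤ (a + 1) ^ γ - a ^ γ := by
  rcases eq_or_lt_of_le ha with h0 | hpos
  · rw [← h0]
    rw [Real.zero_rpow hγ0.ne']
    norm_num [Real.one_rpow]
    linarith
  · obtain ⟨c, hc, hder⟩ := exists_hasDerivAt_eq_slope (fun x => x ^ γ)
      (fun x => γ * x ^ (γ - 1)) (by linarith : a < a + 1)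
      (fun x hx => (Real.continuousAt_rpow_const x γ (Or.inr hγ0.le)).continuousWithinAt)
      (fun x hx => Real.hasDerivAt_rpow_const (Or.inl (by nlinarith [hx.1] : x ≠ 0)))
    have hslope : γ * c ^ (γ - 1) = (a + 1) ^ γ - a ^ γ := by
      rw [hder]; norm_num
    have hmono : (a + 1) ^ (γ - 1) ≤ c ^ (γ - 1) :=
      Real.rpow_le_rpow_of_nonpos (by linarith [hc.1]) hc.2.le (by linarith)
    nlinarith [hmono]

/-- If `γ ∈ (0,1)` and `∫_{−∞}^0 ∫_ℝ min(1, |((1−s)^γ − (−s)^γ)x|²) ρ(dx) ds < ∞`, then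
`∫_{|γx|>1} (|γx|^{1/(1−γ)} − 1) ρ(dx) < ∞` and `∫_{|x|>1} |x|^{1/(1−γ)} ρ(dx) < ∞`. -/
theorem tail_moment_from_welldefinedness (γ : ℝ) (hγ0 : 0 < γ) (hγ1 : γ < 1)
    (ρ : Measure ℝ)
    (h : ∫⁻ s in Set.Iic (0:ℝ),
          ∫⁻ x, ENNReal.ofReal
            (min 1 (|((1 - s) ^ γ - (-s) ^ γ) * x| ^ 2)) ∂ρ < ⊤) :
    (∫⁻ x in {x : ℝ | 1 < |γ * x|},
        ENNReal.ofReal (|γ * x| ^ (1 / (1 - γ)) - 1) ∂ρ < ⊤) ∧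
    (∫⁻ x in {x : ℝ | 1 < |x|},
        ENNReal.ofReal (|x| ^ (1 / (1 - γ))) ∂ρ < ⊤) := by
  have h1γ : (0:ℝ) < 1 - γ := by linarith
  set p : ℝ := 1 / (1 - γ) with hp_def
  have hp : 0 < p := by positivity
  have hfl : ∀ s ≤ (0:ℝ), γ * (1 - s) ^ (γ - 1) ≤ (1 - s) ^ γ - (-s) ^ γ := by
    intro s hs
    have := tangent_ineq_aux γ hγ0 hγ1 (-s) (by linarith)
    have e : -s + 1 = 1 - s := by ring
    rwa [e] at this
  have hfpos : ∀ s ≤ (0:ℝ), 0 < (1 - s) ^ γ - (-s) ^ γ := by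
    intro s hs
    have h1s : (0:ℝ) < 1 - s := by linarith
    have h1 := hfl s hs
    have h2 : 0 < γ * (1 - s) ^ (γ - 1) := by positivity
    linarith
  set S2 : Set ℝ := {x : ℝ | 1 < |x|} with hS2
  have hS2m : MeasurableSet S2 := measurableSet_lt measurable_const measurable_id.abs
  -- finiteness of ρ on S2
  have hρfin : ρ S2 < ⊤ := by
    by_contra hcon
    push_neg at hcon
    have hρtop : ρ S2 = ⊤ := top_le_iff.mp hcon
    have hbig : ∀ s ∈ Set.Iic (0:ℝ),
        (⊤:ℝ≥0∞) ≤ ∫⁻ x, ENNReal.ofReal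
          (min 1 (|((1 - s) ^ γ - (-s) ^ γ) * x| ^ 2)) ∂ρ := by
      intro s hs
      set fs := (1 - s) ^ γ - (-s) ^ γ with hfs
      have hfsp : 0 < fs := hfpos s hs
      have hc : (0:ℝ) < min 1 (fs ^ 2) := lt_min one_pos (by positivity)
      calc (⊤:ℝ≥0∞) = ENNReal.ofReal (min 1 (fs ^ 2)) * ρ S2 := by
            rw [hρtop, ENNReal.mul_top (by simp only [ne_eq, ENNReal.ofReal_eq_zero, not_le]; exact hc)]
        _ = ∫⁻ _ in S2, ENNReal.ofReal (min 1 (fs ^ 2)) ∂ρ := by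
            rw [setLIntegral_const]
        _ ≤ ∫⁻ x in S2, ENNReal.ofReal (min 1 (|fs * x| ^ 2)) ∂ρ := by
            refine lintegral_mono_ae ?_
            filter_upwards [ae_restrict_mem hS2m] with x hx
            refine ENNReal.ofReal_le_ofReal (min_le_min le_rfl ?_)
            have hx1 : 1 < |x| := hx
            have : |fs * x| ^ 2 = fs ^ 2 * |x| ^ 2 := by
              rw [abs_mul, mul_pow, sq_abs]
            rw [this]
            have hx2 : (1:ℝ) ≤ |x| ^ 2 := by nlinarith [abs_nonneg x]
            nlinarith [sq_nonneg fs]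
        _ ≤ ∫⁻ x, ENNReal.ofReal (min 1 (|fs * x| ^ 2)) ∂ρ :=
            setLIntegral_le_lintegral _ _
    have htop : (⊤:ℝ≥0∞) ≤ ∫⁻ s in Set.Iic (0:ℝ),
        ∫⁻ x, ENNReal.ofReal (min 1 (|((1 - s) ^ γ - (-s) ^ γ) * x| ^ 2)) ∂ρ := by
      have : (⊤:ℝ≥0∞) = ∫⁻ _ in Set.Iic (0:ℝ), (⊤:ℝ≥0∞) := by
        rw [setLIntegral_const, Real.volume_Iic, ENNReal.top_mul (by simp)]
      rw [this]
      refine lintegral_mono_ae ?_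
      filter_upwards [ae_restrict_mem measurableSet_Iic] with s hs
      exact hbig s hs
    exact absurd h (not_lt.mpr htop)
  set ρ' := ρ.restrict S2 with hρ'
  haveI : IsFiniteMeasure ρ' := ⟨by rw [hρ', Measure.restrict_apply_univ]; exact hρfin⟩
  have hmeas : AEMeasurable
      (Function.uncurry fun s x : ℝ => ENNReal.ofReal
        (min 1 (|((1 - s) ^ γ - (-s) ^ γ) * x| ^ 2)))
      ((volume.restrict (Set.Iic (0:ℝ))).prod ρ') := by
    apply Measurable.aemeasurable
    apply Measurable.ennreal_ofReal
    apply Measurable.min measurable_const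
    apply Measurable.pow _ measurable_const
    apply Measurable.abs
    have hrpγ : Measurable fun t : ℝ => t ^ γ :=
      (Real.continuous_rpow_const hγ0.le).measurable
    exact ((hrpγ.comp (measurable_const.sub measurable_fst)).sub
      (hrpγ.comp measurable_fst.neg)).mul measurable_snd
  have hswap := lintegral_lintegral_swap hmeas
  have h' : ∫⁻ x, (∫⁻ s in Set.Iic (0:ℝ), ENNReal.ofReal
      (min 1 (|((1 - s) ^ γ - (-s) ^ γ) * x| ^ 2))) ∂ρ' < ⊤ := by
    refine lt_of_le_of_lt ?_ h
    rw [← hswap]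
    exact lintegral_mono fun s => lintegral_mono' Measure.restrict_le_self le_rfl
  -- pointwise key bound
  have key : ∀ x : ℝ, ENNReal.ofReal (|γ * x| ^ p - 1) ≤
      ∫⁻ s in Set.Iic (0:ℝ), ENNReal.ofReal
        (min 1 (|((1 - s) ^ γ - (-s) ^ γ) * x| ^ 2)) := by
    intro x
    set T := |γ * x| ^ p with hT
    rcases le_or_gt T 1 with hT1 | hT1
    · have : ENNReal.ofReal (T - 1) = 0 := ENNReal.ofReal_eq_zero.mpr (by linarith)
      rw [this]; exact zero_le
    · have hγx : 1 < |γ * x| := by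
        by_contra hle
        push_neg at hle
        have : T ≤ 1 := Real.rpow_le_one (abs_nonneg _) hle hp.le
        linarith
      have habs : |γ * x| = γ * |x| := by rw [abs_mul, abs_of_pos hγ0]
      have hxpos : 0 < |x| := by
        rcases le_or_gt (|x|) 0 with h0 | h0
        · exfalso; nlinarith [abs_nonneg (γ * x)]
        · exact h0
      calc ENNReal.ofReal (T - 1) = volume (Set.Icc (1 - T) 0) := by
            rw [Real.volume_Icc]; congr 1; ring
        _ = ∫⁻ _ in Set.Icc (1 - T) 0, (1:ℝ≥0∞) := by rw [setLIntegral_one]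
        _ ≤ ∫⁻ s in Set.Icc (1 - T) 0, ENNReal.ofReal
              (min 1 (|((1 - s) ^ γ - (-s) ^ γ) * x| ^ 2)) := by
            refine lintegral_mono_ae ?_
            filter_upwards [ae_restrict_mem measurableSet_Icc] with s hs
            have hs0 : s ≤ 0 := hs.2
            have h1s : (1:ℝ) ≤ 1 - s := by linarith
            have hsT : 1 - s ≤ T := by linarith [hs.1]
            have hTe : T ^ (1 - γ) = |γ * x| := by
              rw [hT, ← Real.rpow_mul (abs_nonneg _),
                show p * (1 - γ) = 1 by rw [hp_def]; field_simp, Real.rpow_one]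
            have h1spos : (0:ℝ) < 1 - s := by linarith
            have hA : (1 - s) ^ (1 - γ) ≤ γ * |x| := by
              calc (1 - s) ^ (1 - γ) ≤ T ^ (1 - γ) :=
                    Real.rpow_le_rpow (by linarith) hsT h1γ.le
                _ = γ * |x| := by rw [hTe, habs]
            have hd : (0:ℝ) < (1 - s) ^ (1 - γ) := Real.rpow_pos_of_pos h1spos _
            have hB : 1 ≤ γ * (1 - s) ^ (γ - 1) * |x| := by
              rw [show γ - 1 = -(1 - γ) by ring, Real.rpow_neg h1spos.le,
                show γ * ((1 - s) ^ (1 - γ))⁻¹ * |x| = γ * |x| / (1 - s) ^ (1 - γ) by ring,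
                le_div_iff₀ hd]
              linarith
            have hfb := hfl s hs0
            have hfp := hfpos s hs0
            have hone : 1 ≤ |((1 - s) ^ γ - (-s) ^ γ) * x| := by
              rw [abs_mul, abs_of_pos hfp]
              calc (1:ℝ) ≤ γ * (1 - s) ^ (γ - 1) * |x| := hB
                _ ≤ ((1 - s) ^ γ - (-s) ^ γ) * |x| :=
                    mul_le_mul_of_nonneg_right hfb (abs_nonneg x)
            have hmin : min 1 (|((1 - s) ^ γ - (-s) ^ γ) * x| ^ 2) = 1 :=
              min_eq_left (by nlinarith)
            rw [hmin, ENNReal.ofReal_one]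
        _ ≤ ∫⁻ s in Set.Iic (0:ℝ), ENNReal.ofReal
              (min 1 (|((1 - s) ^ γ - (-s) ^ γ) * x| ^ 2)) :=
            lintegral_mono' (Measure.restrict_mono (fun s hs => hs.2) le_rfl) le_rfl
  have hK : ∫⁻ x, ENNReal.ofReal (|γ * x| ^ p - 1) ∂ρ' < ⊤ :=
    lt_of_le_of_lt (lintegral_mono key) h'
  have hS1m : MeasurableSet {x : ℝ | 1 < |γ * x|} :=
    measurableSet_lt measurable_const ((measurable_const.mul measurable_id).abs)
  have hS1sub : {x : ℝ | 1 < |γ * x|} ⊆ S2 := by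
    intro x hx
    simp only [Set.mem_setOf_eq] at hx
    have h1 : |γ * x| ≤ |x| := by
      rw [abs_mul, abs_of_pos hγ0]; nlinarith [abs_nonneg x]
    show (1:ℝ) < |x|
    linarith
  constructor
  · have heq : ∫⁻ x in {x : ℝ | 1 < |γ * x|}, ENNReal.ofReal (|γ * x| ^ p - 1) ∂ρ
        = ∫⁻ x in {x : ℝ | 1 < |γ * x|}, ENNReal.ofReal (|γ * x| ^ p - 1) ∂ρ' := by
      rw [hρ', Measure.restrict_restrict hS1m, Set.inter_eq_left.mpr hS1sub]
    rw [heq]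
    exact lt_of_le_of_lt (setLIntegral_le_lintegral _ _) hK
  · set C : ℝ := γ ^ (-p) with hC
    have hCpos : 0 < C := Real.rpow_pos_of_pos hγ0 _
    have hCinv : γ⁻¹ ^ p = C := by
      rw [hC, Real.rpow_neg hγ0.le, ← Real.inv_rpow hγ0.le]
    have hbd : ∀ x : ℝ, ENNReal.ofReal (|x| ^ p) ≤
        ENNReal.ofReal C * ENNReal.ofReal (|γ * x| ^ p - 1) + ENNReal.ofReal C := by
      intro x
      have habs : |γ * x| = γ * |x| := by rw [abs_mul, abs_of_pos hγ0]
      rcases le_or_gt (|γ * x|) 1 with hle | hgt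
      · have h1 : |x| ≤ γ⁻¹ := by
          rw [habs] at hle
          rw [inv_eq_one_div, le_div_iff₀ hγ0]
          linarith
        have h2 : |x| ^ p ≤ C := by
          rw [← hCinv]
          exact Real.rpow_le_rpow (abs_nonneg _) h1 hp.le
        calc ENNReal.ofReal (|x| ^ p) ≤ ENNReal.ofReal C := ENNReal.ofReal_le_ofReal h2
          _ ≤ _ := le_add_self
      · have hT1 : 1 ≤ |γ * x| ^ p := Real.one_le_rpow hgt.le hp.le
        have hxeq : |x| = γ⁻¹ * |γ * x| := by rw [habs]; field_simp
        have heq2 : |x| ^ p = C * (|γ * x| ^ p - 1) + C := by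
          rw [hxeq, Real.mul_rpow (by positivity) (abs_nonneg _), hCinv]
          ring
        rw [heq2, ENNReal.ofReal_add (by nlinarith) hCpos.le,
          ENNReal.ofReal_mul hCpos.le]
    have hm : Measurable fun x : ℝ => ENNReal.ofReal (|γ * x| ^ p - 1) := by
      apply Measurable.ennreal_ofReal
      exact ((Real.continuous_rpow_const hp.le).measurable.comp
        ((measurable_const.mul measurable_id).abs)).sub measurable_const
    calc ∫⁻ x in S2, ENNReal.ofReal (|x| ^ p) ∂ρ
        = ∫⁻ x, ENNReal.ofReal (|x| ^ p) ∂ρ' := rfl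
      _ ≤ ∫⁻ x, (ENNReal.ofReal C * ENNReal.ofReal (|γ * x| ^ p - 1)
            + ENNReal.ofReal C) ∂ρ' := lintegral_mono hbd
      _ = ENNReal.ofReal C * (∫⁻ x, ENNReal.ofReal (|γ * x| ^ p - 1) ∂ρ')
            + ENNReal.ofReal C * ρ' Set.univ := by
          rw [lintegral_add_right _ measurable_const, lintegral_const,
            lintegral_const_mul _ hm]
      _ < ⊤ := by
          refine ENNReal.add_lt_top.mpr ⟨?_, ?_⟩
          · exact ENNReal.mul_lt_top ENNReal.ofReal_lt_top hK
          · exact ENNReal.mul_lt_top ENNReal.ofReal_lt_top (measure_lt_top _ _)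
end

section
/- Fix γ ∈ (0, 1/2). There exist finite constants c, c̃ > 0, independent of v and x, such that for all x ∈ ℝ, c·|x|^{1/(1−γ)}/(1/2 − γ) ≤ ∫₀^∞ min(|x·γ t^{γ−1}|, |x·γ t^{γ−1}|²) dt ≤ c̃·|x|^{1/(1−γ)}/(1/2 − γ). -/
open MeasureTheory Real Set

lemma aux_integral (γ : ℝ) (hγ0 : 0 < γ) (hγ : γ < 1/2) (a : ℝ) (ha : 0 < a) :
    ∫ t in Set.Ioi (0:ℝ), min (a * t ^ (γ-1)) ((a * t ^ (γ-1))^2)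
      = a ^ (1/(1-γ)) * (1/γ + 1/(1-2*γ)) := by
  have h1γ : 0 < 1 - γ := by linarith
  set t₀ : ℝ := a ^ (1/(1-γ)) with ht₀def
  have ht₀ : 0 < t₀ := Real.rpow_pos_of_pos ha _
  have ht₀pow : t₀ ^ (γ-1) = a⁻¹ := by
    rw [ht₀def, ← Real.rpow_mul ha.le]
    rw [show (1/(1-γ)) * (γ-1) = -1 by field_simp; ring]
    exact Real.rpow_neg_one a
  -- on (0, t₀], a * t^(γ-1) ≥ 1, min is the linear term
  have hlin : ∀ t ∈ Ioc (0:ℝ) t₀,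
      min (a * t ^ (γ-1)) ((a * t ^ (γ-1))^2) = a * t ^ (γ-1) := by
    intro t ht
    have htpos : 0 < t := ht.1
    have h1 : t₀ ^ (γ-1) ≤ t ^ (γ-1) :=
      Real.rpow_le_rpow_of_nonpos htpos ht.2 (by linarith)
    have h2 : (1:ℝ) ≤ a * t ^ (γ-1) := by
      rw [ht₀pow] at h1
      calc (1:ℝ) = a * a⁻¹ := (mul_inv_cancel₀ ha.ne').symm
        _ ≤ a * t ^ (γ-1) := by
            exact mul_le_mul_of_nonneg_left h1 ha.le
    exact min_eq_left (by nlinarith)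
  have hsq : ∀ t ∈ Ioi t₀,
      min (a * t ^ (γ-1)) ((a * t ^ (γ-1))^2) = a^2 * t ^ (2*γ-2) := by
    intro t ht
    have htpos : 0 < t := ht₀.trans ht
    have h1 : t ^ (γ-1) ≤ t₀ ^ (γ-1) :=
      Real.rpow_le_rpow_of_nonpos ht₀ (le_of_lt ht) (by linarith)
    have h2 : a * t ^ (γ-1) ≤ 1 := by
      rw [ht₀pow] at h1
      calc a * t ^ (γ-1) ≤ a * a⁻¹ := mul_le_mul_of_nonneg_left h1 ha.le
        _ = 1 := mul_inv_cancel₀ ha.ne'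
    have h3 : 0 ≤ a * t ^ (γ-1) :=
      mul_nonneg ha.le (Real.rpow_nonneg htpos.le _)
    have h4 : (a * t ^ (γ-1))^2 = a^2 * t ^ (2*γ-2) := by
      rw [mul_pow, sq (t ^ (γ-1)), ← Real.rpow_add htpos]
      ring_nf
    rw [min_eq_right (by nlinarith), h4]
  have hsplit : Ioi (0:ℝ) = Ioc 0 t₀ ∪ Ioi t₀ := (Set.Ioc_union_Ioi_eq_Ioi ht₀.le).symm
  have hint1' : IntegrableOn (fun t : ℝ => a * t ^ (γ-1)) (Ioc 0 t₀) := by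
    have := (intervalIntegral.intervalIntegrable_rpow' (a := 0) (b := t₀) (r := γ-1) (by linarith)).const_mul a
    rwa [intervalIntegrable_iff_integrableOn_Ioc_of_le ht₀.le] at this
  have hint2' : IntegrableOn (fun t : ℝ => a^2 * t ^ (2*γ-2)) (Ioi t₀) :=
    (integrableOn_Ioi_rpow_of_lt (by linarith) ht₀).const_mul _
  have hint1 : IntegrableOn
      (fun t : ℝ => min (a * t ^ (γ-1)) ((a * t ^ (γ-1))^2)) (Ioc 0 t₀) :=
    hint1'.congr_fun (fun t ht => (hlin t ht).symm) measurableSet_Ioc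
  have hint2 : IntegrableOn
      (fun t : ℝ => min (a * t ^ (γ-1)) ((a * t ^ (γ-1))^2)) (Ioi t₀) :=
    hint2'.congr_fun (fun t ht => (hsq t ht).symm) measurableSet_Ioi
  rw [hsplit, setIntegral_union (Set.Ioc_disjoint_Ioi le_rfl) measurableSet_Ioi hint1 hint2]
  have e1 : ∫ t in Ioc (0:ℝ) t₀, min (a * t ^ (γ-1)) ((a * t ^ (γ-1))^2)
      = a * t₀ ^ γ / γ := by
    rw [setIntegral_congr_fun measurableSet_Ioc hlin,
      ← intervalIntegral.integral_of_le ht₀.le, intervalIntegral.integral_const_mul,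
      integral_rpow (Or.inl (by linarith))]
    rw [Real.zero_rpow (by linarith : γ - 1 + 1 ≠ 0)]
    rw [show γ - 1 + 1 = γ by ring]
    ring
  have e2 : ∫ t in Ioi t₀, min (a * t ^ (γ-1)) ((a * t ^ (γ-1))^2)
      = a^2 * (t₀ ^ (2*γ-1) / (1-2*γ)) := by
    rw [setIntegral_congr_fun measurableSet_Ioi hsq, MeasureTheory.integral_const_mul,
      integral_Ioi_rpow_of_lt (by linarith) ht₀]
    rw [show 2*γ - 2 + 1 = 2*γ-1 by ring]
    have h2γ : (2*γ-1 : ℝ) ≠ 0 := by intro h; linarith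
    have h2γ' : (1-2*γ : ℝ) ≠ 0 := by intro h; linarith
    field_simp
    ring
  rw [e1, e2]
  have hp1 : t₀ ^ γ = a ^ (γ/(1-γ)) := by
    rw [ht₀def, ← Real.rpow_mul ha.le]; ring_nf
  have hp2 : t₀ ^ (2*γ-1) = a ^ ((2*γ-1)/(1-γ)) := by
    rw [ht₀def, ← Real.rpow_mul ha.le]; ring_nf
  rw [hp1, hp2]
  have q1 : a * a ^ (γ/(1-γ)) = a ^ (1/(1-γ)) := by
    rw [← Real.rpow_one_add' ha.le (by positivity)]
    congr 1; field_simp; ring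
  have q2 : a^2 * a ^ ((2*γ-1)/(1-γ)) = a ^ (1/(1-γ)) := by
    rw [show (a:ℝ)^2 = a ^ (2:ℝ) by rw [← Real.rpow_natCast a 2]; norm_num,
      ← Real.rpow_add ha]
    congr 1; field_simp; ring
  rw [q1, ← mul_div_assoc, q2, ht₀def]
  ring

lemma scalar_bounds (γ : ℝ) (hγ0 : 0 < γ) (hγ : γ < 1/2) :
    (1/32) / (1/2 - γ) ≤ γ ^ (1/(1-γ)) * (1/γ + 1/(1-2*γ)) ∧
    γ ^ (1/(1-γ)) * (1/γ + 1/(1-2*γ)) ≤ 1 / (1/2 - γ) := by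
  have h1γ : 0 < 1 - γ := by linarith
  have hd : 0 < 1 - 2*γ := by linarith
  have hhalf : 0 < 1/2 - γ := by linarith
  have hp1 : 1 ≤ 1/(1-γ) := by rw [le_div_iff₀ h1γ]; linarith
  have hp2 : 1/(1-γ) ≤ 2 := by rw [div_le_iff₀ h1γ]; linarith
  have hγ1 : γ ≤ 1 := by linarith
  have hpos : 0 < γ ^ (1/(1-γ)) := Real.rpow_pos_of_pos hγ0 _
  have hu : γ ^ (1/(1-γ)) ≤ γ := by
    have := Real.rpow_le_rpow_of_exponent_ge hγ0 hγ1 hp1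
    rwa [Real.rpow_one] at this
  have hexpand : γ ^ (1/(1-γ)) * (1/γ + 1/(1-2*γ)) * (1/2-γ)
      = (γ ^ (1/(1-γ)) / γ) * (1/2-γ) + γ ^ (1/(1-γ)) / 2 := by
    have hdne : 1 - 2*γ ≠ 0 := hd.ne'
    have hk : (1/2-γ) * (1/(1-2*γ)) = 1/2 := by
      rw [mul_one_div, div_eq_iff hdne]; ring
    linear_combination γ ^ (1/(1-γ)) * hk
  constructor
  · rw [div_le_iff₀ hhalf, hexpand]
    have hdivpos : 0 ≤ γ ^ (1/(1-γ)) / γ := by positivity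
    rcases le_or_gt (1/4 : ℝ) γ with h4 | h4
    · -- γ ≥ 1/4 : γ^p ≥ γ^2 ≥ 1/16
      have h2 : γ ^ (2:ℝ) ≤ γ ^ (1/(1-γ)) :=
        Real.rpow_le_rpow_of_exponent_ge hγ0 hγ1 hp2
      have h2' : γ ^ (2:ℝ) = γ * γ := by
        rw [show (2:ℝ) = ((2:ℕ):ℝ) by norm_num, Real.rpow_natCast]; ring
      rw [h2'] at h2
      have h16 : (1/16:ℝ) ≤ γ ^ (1/(1-γ)) := by
        nlinarith [h2, mul_le_mul h4 h4 (by norm_num : (0:ℝ) ≤ 1/4) hγ0.le]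
      have hterm : 0 ≤ (γ ^ (1/(1-γ)) / γ) * (1/2-γ) :=
        mul_nonneg hdivpos hhalf.le
      linarith
    · -- γ < 1/4 : γ^(p-1) ≥ exp(-2) ≥ 1/8
      have hps : γ ^ (1/(1-γ) - 1) = γ ^ (1/(1-γ)) / γ := by
        rw [Real.rpow_sub hγ0, Real.rpow_one]
      have hpe : 1/(1-γ) - 1 ≤ 2*γ := by
        rw [sub_le_iff_le_add, div_le_iff₀ h1γ]; nlinarith
      have hmono : γ ^ (2*γ) ≤ γ ^ (1/(1-γ) - 1) :=
        Real.rpow_le_rpow_of_exponent_ge hγ0 hγ1 hpe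
      have hlog : -1 ≤ γ * Real.log γ := by
        have h5 := Real.log_le_sub_one_of_pos (show (0:ℝ) < γ⁻¹ by positivity)
        rw [Real.log_inv] at h5
        have h6 : γ * (-Real.log γ) ≤ γ * (γ⁻¹ - 1) :=
          mul_le_mul_of_nonneg_left h5 hγ0.le
        have h7 : γ * γ⁻¹ = 1 := mul_inv_cancel₀ hγ0.ne'
        nlinarith [h6, h7]
      have hexp : Real.exp (-2) ≤ γ ^ (2*γ) := by
        rw [Real.rpow_def_of_pos hγ0]
        exact Real.exp_le_exp.mpr (by nlinarith)
      have h8 : Real.exp 2 ≤ 8 := by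
        have h9 : Real.exp 2 = Real.exp 1 * Real.exp 1 := by
          rw [← Real.exp_add]; norm_num
        have h10 := Real.exp_one_lt_d9
        nlinarith [Real.exp_pos 1]
      have h18 : (1/8:ℝ) ≤ Real.exp (-2) := by
        rw [Real.exp_neg, show (1/8:ℝ) = (8:ℝ)⁻¹ by norm_num]
        exact inv_anti₀ (Real.exp_pos 2) h8
      have key : (1/8:ℝ) ≤ γ ^ (1/(1-γ)) / γ := by
        rw [← hps]; linarith
      have hterm : (1/8:ℝ) * (1/4) ≤ (γ ^ (1/(1-γ)) / γ) * (1/2-γ) :=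
        mul_le_mul key (by linarith) (by norm_num) hdivpos
      linarith
  · rw [le_div_iff₀ hhalf, hexpand]
    have t1 : γ ^ (1/(1-γ)) / γ ≤ 1 := by rw [div_le_one hγ0]; exact hu
    have hterm : (γ ^ (1/(1-γ)) / γ) * (1/2-γ) ≤ 1 * (1/2) :=
      mul_le_mul t1 (by linarith) hhalf.le (by norm_num)
    linarith

/-- There exist constants `c, c̃ > 0`, independent of `γ` and `x`, such that for all
`γ ∈ (0,1/2)` and all `x ∈ ℝ`,
`c·|x|^{1/(1−γ)}/(1/2−γ) ≤ ∫₀^∞ min(|xγt^{γ−1}|, |xγt^{γ−1}|²) dt ≤ c̃·|x|^{1/(1−γ)}/(1/2−γ)`. -/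
theorem fractional_kernel_two_sided_bound :
    ∃ c c2 : ℝ, 0 < c ∧ 0 < c2 ∧
      ∀ γ : ℝ, 0 < γ → γ < 1/2 → ∀ x : ℝ,
        c * |x| ^ (1 / (1 - γ)) / (1/2 - γ) ≤
          (∫ t in Set.Ioi (0:ℝ),
            min |x * (γ * t ^ (γ - 1))| (|x * (γ * t ^ (γ - 1))| ^ 2)) ∧
        (∫ t in Set.Ioi (0:ℝ),
            min |x * (γ * t ^ (γ - 1))| (|x * (γ * t ^ (γ - 1))| ^ 2)) ≤
          c2 * |x| ^ (1 / (1 - γ)) / (1/2 - γ) := by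
  refine ⟨1/32, 1, by norm_num, by norm_num, fun γ hγ0 hγ x => ?_⟩
  have h1γ : 0 < 1 - γ := by linarith
  have hhalf : 0 < 1/2 - γ := by linarith
  rcases eq_or_ne x 0 with rfl | hx
  · have hne : 1/(1-γ) ≠ 0 := by positivity
    have h0 : (∫ t in Set.Ioi (0:ℝ),
        min |(0:ℝ) * (γ * t ^ (γ - 1))| (|(0:ℝ) * (γ * t ^ (γ - 1))| ^ 2)) = 0 := by
      simp
    rw [h0, abs_zero, Real.zero_rpow hne]
    norm_num
  · have hax : 0 < |x| := abs_pos.mpr hx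
    have ha : 0 < |x| * γ := by positivity
    have hcong : Set.EqOn
        (fun t : ℝ => min |x * (γ * t ^ (γ - 1))| (|x * (γ * t ^ (γ - 1))| ^ 2))
        (fun t : ℝ => min ((|x| * γ) * t ^ (γ-1)) (((|x| * γ) * t ^ (γ-1))^2))
        (Set.Ioi 0) := by
      intro t ht
      have htpos : (0:ℝ) < t := ht
      have habs : |x * (γ * t ^ (γ - 1))| = (|x| * γ) * t ^ (γ-1) := by
        rw [abs_mul, abs_of_nonneg (show 0 ≤ γ * t ^ (γ-1) by positivity)]
        ring
      simp only [habs]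
    rw [setIntegral_congr_fun measurableSet_Ioi hcong,
      aux_integral γ hγ0 hγ (|x| * γ) ha,
      Real.mul_rpow (abs_nonneg x) hγ0.le]
    have hB : 0 ≤ |x| ^ (1/(1-γ)) := Real.rpow_nonneg (abs_nonneg x) _
    obtain ⟨s1, s2⟩ := scalar_bounds γ hγ0 hγ
    constructor
    · calc 1/32 * |x| ^ (1/(1-γ)) / (1/2 - γ)
          = (1/32 / (1/2 - γ)) * |x| ^ (1/(1-γ)) := by ring
        _ ≤ (γ ^ (1/(1-γ)) * (1/γ + 1/(1-2*γ))) * |x| ^ (1/(1-γ)) :=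
            mul_le_mul_of_nonneg_right s1 hB
        _ = |x| ^ (1/(1-γ)) * γ ^ (1/(1-γ)) * (1/γ + 1/(1-2*γ)) := by ring
    · calc |x| ^ (1/(1-γ)) * γ ^ (1/(1-γ)) * (1/γ + 1/(1-2*γ))
          = (γ ^ (1/(1-γ)) * (1/γ + 1/(1-2*γ))) * |x| ^ (1/(1-γ)) := by ring
        _ ≤ (1 / (1/2 - γ)) * |x| ^ (1/(1-γ)) :=
            mul_le_mul_of_nonneg_right s2 hB
        _ = 1 * |x| ^ (1/(1-γ)) / (1/2 - γ) := by ring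
end
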